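/- For every integer K ≥ 8, log(K·log K)·H_{σ,2} > log(2K)·H_{σ,2} ≥ H_{σ,1}, where H_{σ,1} and H_{σ,2} are defined from any gaps Δᵢ ∈ (0,1] and variances σᵢ ≥ 0 as H_{σ,1} = Σᵢ (σᵢ + sqrt(σᵢ² + (16/3)Δᵢ))/Δᵢ² and H_{σ,2} = max_i i/Δ̃_{(i)}² with Δ̃ᵢ² = Δᵢ²/(σᵢ + sqrt(σᵢ² + (16/3)Δᵢ)) sorted increasingly. -/

import Mathlib

lemma harmonic_le_log (n : ℕ) (hn : 8 ≤ n) :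
    ∑ i ∈ Finset.range n, (1 : ℝ) / (i + 1) ≤ Real.log (2 * n) := by
  induction n, hn using Nat.le_induction with
  | base =>
      have h2 : (0.6931471803 : ℝ) < Real.log 2 := Real.log_two_gt_d9
      have h16 : (2 * ((8 : ℕ) : ℝ)) = 2 ^ 4 := by norm_num
      rw [h16, Real.log_pow]
      norm_num [Finset.sum_range_succ]
      nlinarith
  | succ n hn ih =>
      rw [Finset.sum_range_succ]
      have hn0 : (0 : ℝ) < n := by positivity
      have hn1 : (0 : ℝ) < n + 1 := by linarith
      have hkey : Real.log (n / (n + 1)) ≤ n / (n + 1) - 1 :=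
        Real.log_le_sub_one_of_pos (by positivity)
      have hlogdiv : Real.log (n / (n + 1)) = Real.log n - Real.log (n + 1) :=
        Real.log_div (ne_of_gt hn0) (ne_of_gt hn1)
      have hfrac : (n : ℝ) / (n + 1) - 1 = -(1 / ((n : ℝ) + 1)) := by field_simp; ring
      have hstep : (1 : ℝ) / (n + 1) ≤ Real.log (n + 1) - Real.log n := by
        rw [hlogdiv, hfrac] at hkey; linarith
      have h2n : Real.log (2 * n) = Real.log 2 + Real.log n :=
        Real.log_mul (by norm_num) (ne_of_gt hn0)
      have h2n1 : Real.log (2 * ((n : ℝ) + 1)) = Real.log 2 + Real.log (n + 1) :=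
        Real.log_mul (by norm_num) (ne_of_gt hn1)
      push_cast
      rw [h2n1]
      rw [h2n] at ih
      push_cast at ih
      linarith

theorem stmt_12 (K : ℕ) (hK : 8 ≤ K) (Δ σ : Fin K → ℝ)
    (hΔ : ∀ i, Δ i ∈ Set.Ioc (0 : ℝ) 1) (hσ : ∀ i, 0 ≤ σ i)
    (g : Fin K → ℝ)
    (hg : ∀ i, g i = (Δ i) ^ 2 / (σ i + Real.sqrt ((σ i) ^ 2 + (16 / 3) * Δ i)))
    (e : Equiv.Perm (Fin K)) (gs : Fin K → ℝ) (hgs : gs = g ∘ e) (hsort : Monotone gs)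
    (hne : (Finset.univ : Finset (Fin K)).Nonempty)
    (H₁ H₂ : ℝ)
    (hH₁ : H₁ = ∑ i : Fin K, (σ i + Real.sqrt ((σ i) ^ 2 + (16 / 3) * Δ i)) / (Δ i) ^ 2)
    (hH₂ : H₂ = Finset.univ.sup' hne (fun i : Fin K => ((i : ℕ) + 1 : ℝ) / gs i)) :
    Real.log (2 * K) * H₂ < Real.log (K * Real.log K) * H₂ ∧
      H₁ ≤ Real.log (2 * K) * H₂ := by
  have hK0 : (0 : ℝ) < K := by positivity
  -- positivity of denominators
  have hD : ∀ i, 0 < σ i + Real.sqrt ((σ i) ^ 2 + (16 / 3) * Δ i) := by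
    intro i
    have h1 : 0 < (σ i) ^ 2 + (16 / 3) * Δ i := by
      have := (hΔ i).1; nlinarith [sq_nonneg (σ i)]
    have := Real.sqrt_pos.mpr h1
    linarith [hσ i]
  have hg_pos : ∀ i, 0 < g i := by
    intro i; rw [hg i]
    exact div_pos (by nlinarith [(hΔ i).1]) (hD i)
  have hgs_pos : ∀ i, 0 < gs i := by
    intro i; rw [hgs]; exact hg_pos _
  -- H₂ bounds
  have hH2ge : ∀ i : Fin K, ((i : ℕ) + 1 : ℝ) / gs i ≤ H₂ := by
    intro i; rw [hH₂]
    exact Finset.le_sup' (fun i : Fin K => ((i : ℕ) + 1 : ℝ) / gs i) (Finset.mem_univ i)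
  have hK0' : 0 < K := by omega
  have hH2pos : 0 < H₂ := by
    have i0 : Fin K := ⟨0, hK0'⟩
    have hp : (0 : ℝ) < ((i0 : ℕ) + 1 : ℝ) / gs i0 := by
      apply div_pos (by positivity) (hgs_pos i0)
    linarith [hH2ge i0]
  -- Part 1
  have hlogK : (2 : ℝ) < Real.log K := by
    have h8 : Real.log 8 ≤ Real.log K := by
      apply Real.log_le_log (by norm_num)
      exact_mod_cast hK
    have : Real.log (8 : ℝ) = 3 * Real.log 2 := by
      rw [show (8 : ℝ) = 2 ^ 3 by norm_num, Real.log_pow]; ring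
    have h2 : (0.6931471803 : ℝ) < Real.log 2 := Real.log_two_gt_d9
    nlinarith
  have hlt : Real.log (2 * K) < Real.log (K * Real.log K) := by
    apply Real.log_lt_log (by positivity)
    have : (2 : ℝ) * K < K * Real.log K := by nlinarith
    linarith
  refine ⟨mul_lt_mul_of_pos_right hlt hH2pos, ?_⟩
  -- Part 2
  have hH1 : H₁ = ∑ i : Fin K, 1 / gs i := by
    rw [hH₁, hgs]
    have : ∀ i, (σ i + Real.sqrt ((σ i) ^ 2 + (16 / 3) * Δ i)) / (Δ i) ^ 2 = 1 / g i := by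
      intro i; rw [hg i, one_div_div]
    simp only [this, Function.comp]
    exact (Equiv.sum_comp e (fun i => 1 / g i)).symm
  have hbound : ∀ i : Fin K, 1 / gs i ≤ H₂ * (1 / ((i : ℕ) + 1 : ℝ)) := by
    intro i
    have hi : (0 : ℝ) < ((i : ℕ) + 1 : ℝ) := by positivity
    have h := hH2ge i
    rw [div_le_iff₀ (hgs_pos i)] at h
    rw [mul_one_div, div_le_div_iff₀ (hgs_pos i) hi]
    linarith
  have hsum : ∑ i : Fin K, (1 : ℝ) / gs i ≤ H₂ * ∑ i : Fin K, (1 : ℝ) / ((i : ℕ) + 1) := by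
    rw [Finset.mul_sum]
    exact Finset.sum_le_sum fun i _ => hbound i
  have hharm : ∑ i : Fin K, (1 : ℝ) / ((i : ℕ) + 1) ≤ Real.log (2 * K) := by
    rw [Fin.sum_univ_eq_sum_range (fun i => (1 : ℝ) / (i + 1))]
    exact harmonic_le_log K hK
  calc H₁ ≤ H₂ * ∑ i : Fin K, (1 : ℝ) / ((i : ℕ) + 1) := hH1 ▸ hsum
    _ ≤ H₂ * Real.log (2 * K) := by
        exact mul_le_mul_of_nonneg_left hharm (le_of_lt hH2pos)
    _ = Real.log (2 * K) * H₂ := mul_comm _ _
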